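/- Let 1 ≤ k ≤ n and let A_1, …, A_ℓ ⊆ [n] be subsets each of size at most k. Consider the linear program: minimize k − Σ_{i=1}^ℓ δ_i over real numbers δ_1, …, δ_ℓ ≥ 0 subject to Σ_{i∈I} δ_i ≤ k − |A_I| for every nonempty I ⊆ [ℓ]. Then the optimal value of this linear program equals max over all partitions P_1 ⊔ ⋯ ⊔ P_s = [ℓ] into nonempty parts of (Σ_{i=1}^s |A_{P_i}| − (s−1)·k), i.e., it equals the k-dimensional generic intersection dimension of A_1, …, A_ℓ; in particular the optimum is attained at an integral point. -/

import Mathlib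

/-!
STATEMENT 16: Lemma B.1 (lem:duality). The optimal value of the linear program
  minimize k − Σ δ_i  subject to  δ_i ≥ 0 and Σ_{i∈I} δ_i ≤ k − |A_I| (I ≠ ∅)
equals the k-dimensional generic intersection dimension of A_1, …, A_ℓ, i.e. the
maximum over partitions P_1 ⊔ ⋯ ⊔ P_s = [ℓ] of (Σ_i |A_{P_i}| − (s−1)k); moreover the
optimum is attained at an integral point.
-/

open Finset

/-- The value `Σ_{p ∈ P} |∩_{j ∈ p} A_j| − (s − 1)·k` associated to a partition `P`. -/
def partVal {ℓ n : ℕ} (k : ℕ) (A : Fin ℓ → Finset (Fin n))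
    (P : Finpartition (Finset.univ : Finset (Fin ℓ))) : ℤ :=
  (∑ p ∈ P.parts, ((p.inf A).card : ℤ)) - ((P.parts.card : ℤ) - 1) * k

/-- Summing a function over the parts of a finpartition of a finset gives the sum over
the finset. -/
lemma finpartition_sum_parts {α M : Type*} [DecidableEq α] [AddCommMonoid M]
    {s : Finset α} (P : Finpartition s) (g : α → M) :
    ∑ p ∈ P.parts, ∑ x ∈ p, g x = ∑ x ∈ s, g x := by
  conv_rhs => rw [← P.sup_parts, Finset.sup_eq_biUnion, Finset.sum_biUnion P.disjoint]
  rfl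

/-- Submodularity of `I ↦ |A_I|` (in fact supermodularity of cardinality of intersections). -/
lemma card_inf_submod {ℓ n : ℕ} (A : Fin ℓ → Finset (Fin n)) (X Y : Finset (Fin ℓ)) :
    (X.inf A).card + (Y.inf A).card ≤ ((X ∪ Y).inf A).card + ((X ∩ Y).inf A).card := by
  have h1 : (X ∪ Y).inf A = X.inf A ∩ Y.inf A := by
    rw [Finset.inf_union]; rfl
  have h2 : X.inf A ∪ Y.inf A ⊆ (X ∩ Y).inf A :=
    union_subset (Finset.inf_mono inter_subset_left) (Finset.inf_mono inter_subset_right)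
  calc (X.inf A).card + (Y.inf A).card
      = (X.inf A ∪ Y.inf A).card + (X.inf A ∩ Y.inf A).card :=
        (card_union_add_card_inter _ _).symm
    _ ≤ ((X ∩ Y).inf A).card + ((X ∪ Y).inf A).card := by
        rw [h1]; exact Nat.add_le_add_right (card_le_card h2) _
    _ = ((X ∪ Y).inf A).card + ((X ∩ Y).inf A).card := by ring

/-- Key workhorse: for any finset `S` there is an integral feasible solution `δ` (feasible
for all constraints indexed by nonempty subsets of `S`) together with a partition of `S`
all of whose parts are tight. -/
lemma exists_tight {ℓ n : ℕ} (k : ℕ) (A : Fin ℓ → Finset (Fin n))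
    (hA : ∀ i, (A i).card ≤ k) (S : Finset (Fin ℓ)) :
    ∃ (δ : Fin ℓ → ℕ) (P : Finpartition S),
      (∀ I : Finset (Fin ℓ), I.Nonempty → I ⊆ S →
        ∑ i ∈ I, (δ i : ℤ) ≤ (k : ℤ) - ((I.inf A).card : ℤ)) ∧
      (∀ p ∈ P.parts, ∑ i ∈ p, (δ i : ℤ) = (k : ℤ) - ((p.inf A).card : ℤ)) := by
  induction S using Finset.induction_on with
  | empty =>
    refine ⟨0, (Finpartition.empty _).copy bot_eq_empty, ?_, ?_⟩
    · intro I hI hIS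
      exact absurd (subset_empty.mp hIS) hI.ne_empty
    · intro p hp
      simp [Finpartition.copy, Finpartition.empty] at hp
  | @insert i S' hi ih =>
    obtain ⟨δ', P', hfeas', htight'⟩ := ih
    set S : Finset (Fin ℓ) := insert i S' with hSdef
    set C : Finset (Finset (Fin ℓ)) := S.powerset.filter (fun I => i ∈ I) with hCdef
    have hiC : ({i} : Finset (Fin ℓ)) ∈ C := by
      simp [hCdef, hSdef, singleton_subset_iff, mem_insert_self]
    have hCne : C.Nonempty := ⟨{i}, hiC⟩
    set g : Finset (Fin ℓ) → ℤ :=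
      fun I => ((k : ℤ) - ((I.inf A).card : ℤ)) - ∑ j ∈ I.erase i, (δ' j : ℤ) with hgdef
    set m : ℤ := C.inf' hCne g with hmdef
    have hmemC : ∀ I ∈ C, I ⊆ S ∧ i ∈ I := by
      intro I hI
      simp only [hCdef, mem_filter, mem_powerset] at hI
      exact hI
    -- the minimum is nonnegative
    have hm0 : 0 ≤ m := by
      rw [hmdef, Finset.le_inf'_iff]
      intro I hI
      obtain ⟨hIS, hiI⟩ := hmemC I hI
      rcases (I.erase i).eq_empty_or_nonempty with he | he
      · have hIi : I = {i} := by
          apply Finset.eq_singleton_iff_unique_mem.mpr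
          refine ⟨hiI, fun x hx => ?_⟩
          by_contra hxi
          exact absurd (Finset.mem_erase.mpr ⟨hxi, hx⟩) (by simp [he])
        subst hIi
        have : ({i} : Finset (Fin ℓ)).inf A = A i := by simp
        simp only [hgdef, this, he, Finset.sum_empty, sub_zero, sub_nonneg]
        exact_mod_cast hA i
      · have hIeS' : I.erase i ⊆ S' := by
          intro x hx
          rcases mem_insert.mp (hIS (mem_of_mem_erase hx)) with h | h
          · exact absurd h (ne_of_mem_erase hx)
          · exact h
        have h1 := hfeas' _ he hIeS'
        have h2 : (I.inf A).card ≤ ((I.erase i).inf A).card :=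
          card_le_card (Finset.inf_mono (erase_subset _ _))
        have h2' : ((I.inf A).card : ℤ) ≤ (((I.erase i).inf A).card : ℤ) := by exact_mod_cast h2
        simp only [hgdef]
        linarith
    -- the new solution
    set δ : Fin ℓ → ℕ := Function.update δ' i m.toNat with hδdef
    have hδi : (δ i : ℤ) = m := by
      simp [hδdef, Function.update_self, Int.toNat_of_nonneg hm0]
    have hδagree : ∀ J : Finset (Fin ℓ), i ∉ J →
        ∑ j ∈ J, (δ j : ℤ) = ∑ j ∈ J, (δ' j : ℤ) := by
      intro J hiJ
      apply Finset.sum_congr rfl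
      intro j hj
      have : j ≠ i := fun h => hiJ (h ▸ hj)
      simp [hδdef, Function.update_of_ne this]
    -- feasibility of the new solution
    have hfeas : ∀ I : Finset (Fin ℓ), I.Nonempty → I ⊆ S →
        ∑ j ∈ I, (δ j : ℤ) ≤ (k : ℤ) - ((I.inf A).card : ℤ) := by
      intro I hI hIS
      by_cases hiI : i ∈ I
      · have hsplit : ∑ j ∈ I, (δ j : ℤ) = (δ i : ℤ) + ∑ j ∈ I.erase i, (δ j : ℤ) :=
          (Finset.add_sum_erase I (fun j => (δ j : ℤ)) hiI).symm
        have hIC : I ∈ C := by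
          simp only [hCdef, mem_filter, mem_powerset]
          exact ⟨hIS, hiI⟩
        have hmle : m ≤ g I := Finset.inf'_le g hIC
        rw [hsplit, hδi, hδagree _ (notMem_erase _ _)]
        simp only [hgdef] at hmle
        linarith
      · have hIS' : I ⊆ S' := by
          intro x hx
          rcases mem_insert.mp (hIS hx) with h | h
          · exact absurd (h ▸ hx) hiI
          · exact h
        rw [hδagree _ hiI]
        exact hfeas' I hI hIS'
    -- the tight set containing i
    obtain ⟨T, hTC, hTg⟩ := Finset.exists_mem_eq_inf' hCne g
    obtain ⟨hTS, hiT⟩ := hmemC T hTC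
    have hTtight : ∑ j ∈ T, (δ j : ℤ) = (k : ℤ) - ((T.inf A).card : ℤ) := by
      have hsplit : ∑ j ∈ T, (δ j : ℤ) = (δ i : ℤ) + ∑ j ∈ T.erase i, (δ j : ℤ) :=
        (Finset.add_sum_erase T (fun j => (δ j : ℤ)) hiT).symm
      rw [hsplit, hδi, hδagree _ (notMem_erase _ _), ← hmdef] at *
      rw [hTg]
      simp only [hgdef]
      ring
    -- old parts remain tight
    have hparts_sub : ∀ p ∈ P'.parts, p ⊆ S' := fun p hp => P'.le hp
    have hptight : ∀ p ∈ P'.parts, ∑ j ∈ p, (δ j : ℤ) = (k : ℤ) - ((p.inf A).card : ℤ) := by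
      intro p hp
      have : i ∉ p := fun h => hi (hparts_sub p hp h)
      rw [hδagree _ this]
      exact htight' p hp
    -- merging two intersecting tight sets gives a tight set
    have merge : ∀ X Y : Finset (Fin ℓ), X ⊆ S → Y ⊆ S → ¬ Disjoint X Y →
        ∑ j ∈ X, (δ j : ℤ) = (k : ℤ) - ((X.inf A).card : ℤ) →
        ∑ j ∈ Y, (δ j : ℤ) = (k : ℤ) - ((Y.inf A).card : ℤ) →
        ∑ j ∈ X ∪ Y, (δ j : ℤ) = (k : ℤ) - (((X ∪ Y).inf A).card : ℤ) := by
      intro X Y hXS hYS hXY htX htY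
      have hint : (X ∩ Y).Nonempty := Finset.not_disjoint_iff_nonempty_inter.mp hXY
      have hXne : X.Nonempty := hint.mono inter_subset_left
      have hmod : ∑ j ∈ X ∪ Y, (δ j : ℤ) + ∑ j ∈ X ∩ Y, (δ j : ℤ)
          = ∑ j ∈ X, (δ j : ℤ) + ∑ j ∈ Y, (δ j : ℤ) := Finset.sum_union_inter
      have h1 : ∑ j ∈ X ∪ Y, (δ j : ℤ) ≤ (k : ℤ) - (((X ∪ Y).inf A).card : ℤ) :=
        hfeas _ (hXne.mono subset_union_left) (union_subset hXS hYS)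
      have h2 : ∑ j ∈ X ∩ Y, (δ j : ℤ) ≤ (k : ℤ) - (((X ∩ Y).inf A).card : ℤ) :=
        hfeas _ hint ((inter_subset_left).trans hXS)
      have h3 : ((X.inf A).card : ℤ) + ((Y.inf A).card : ℤ)
          ≤ (((X ∪ Y).inf A).card : ℤ) + (((X ∩ Y).inf A).card : ℤ) := by
        exact_mod_cast card_inf_submod A X Y
      linarith
    -- the union of T with all parts meeting it is tight
    have key : ∀ Q : Finset (Finset (Fin ℓ)), Q ⊆ P'.parts → (∀ q ∈ Q, ¬ Disjoint q T) →
        (T ∪ Q.sup id ⊆ S) ∧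
        ∑ j ∈ T ∪ Q.sup id, (δ j : ℤ) = (k : ℤ) - (((T ∪ Q.sup id).inf A).card : ℤ) := by
      intro Q
      induction Q using Finset.induction_on with
      | empty =>
        intro _ _
        simpa using ⟨hTS, hTtight⟩
      | @insert q Q hq ihQ =>
        intro hsub hmeet
        obtain ⟨ihS, ihT⟩ := ihQ (fun x hx => hsub (mem_insert_of_mem hx))
          (fun x hx => hmeet x (mem_insert_of_mem hx))
        have hqS : q ⊆ S := (hparts_sub q (hsub (mem_insert_self _ _))).trans
          (subset_insert _ _)
        have hrw : T ∪ (insert q Q).sup id = (T ∪ Q.sup id) ∪ q := by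
          rw [Finset.sup_insert, sup_eq_union]
          ext x
          simp only [Finset.mem_union, id]
          tauto
        have hnd : ¬ Disjoint (T ∪ Q.sup id) q := by
          intro hd
          apply hmeet q (mem_insert_self _ _)
          exact (hd.mono_left subset_union_left).symm
        have := merge _ _ ihS hqS hnd ihT (hptight q (hsub (mem_insert_self _ _)))
        rw [hrw]
        exact ⟨union_subset ihS hqS, this⟩
    -- new partition
    set Q₀ : Finset (Finset (Fin ℓ)) := P'.parts.filter (fun p => ¬ Disjoint p T) with hQ₀
    set U : Finset (Fin ℓ) := T ∪ Q₀.sup id with hUdef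
    set rest : Finset (Finset (Fin ℓ)) := P'.parts.filter (fun p => Disjoint p T) with hrest
    obtain ⟨hUS, hUtight⟩ := key Q₀ (filter_subset _ _) (fun q hq => (mem_filter.mp hq).2)
    have hTU : T ⊆ U := subset_union_left
    have hrest_disj_U : ∀ p ∈ rest, Disjoint p U := by
      intro p hp
      obtain ⟨hpparts, hpT⟩ := mem_filter.mp hp
      rw [Finset.disjoint_left]
      intro x hxp hxU
      rcases Finset.mem_union.mp hxU with hxT | hxsup
      · exact (Finset.disjoint_left.mp hpT hxp) hxT
      · obtain ⟨q, hqQ, hxq⟩ := Finset.mem_sup.mp hxsup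
        obtain ⟨hqparts, hqT⟩ := mem_filter.mp hqQ
        have hne : p ≠ q := by
          rintro rfl; exact hqT hpT
        exact (Finset.disjoint_left.mp (P'.disjoint hpparts hqparts hne) hxp) hxq
    have hUnotin : U ∉ rest := by
      intro hU
      have := hrest_disj_U U hU
      rw [disjoint_self] at this
      have : U = ∅ := by simpa using this
      exact absurd (hTU hiT) (by simp [this])
    have hcover : (insert U rest).sup id = S := by
      apply Finset.Subset.antisymm
      · intro x hx
        rw [Finset.mem_sup] at hx
        obtain ⟨p, hp, hxp⟩ := hx
        rcases mem_insert.mp hp with rfl | hp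
        · exact hUS hxp
        · exact (subset_insert _ _) (hparts_sub p (mem_filter.mp hp).1 hxp)
      · intro x hx
        rw [Finset.mem_sup]
        rcases mem_insert.mp hx with rfl | hxS'
        · exact ⟨U, mem_insert_self _ _, hTU hiT⟩
        · obtain ⟨p, hpparts, hxp⟩ := P'.exists_mem hxS'
          by_cases hd : Disjoint p T
          · exact ⟨p, mem_insert_of_mem (mem_filter.mpr ⟨hpparts, hd⟩), hxp⟩
          · refine ⟨U, mem_insert_self _ _, ?_⟩
            apply Finset.mem_union_right
            rw [Finset.mem_sup]
            exact ⟨p, mem_filter.mpr ⟨hpparts, hd⟩, hxp⟩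
    have hpd : ((insert U rest : Finset (Finset (Fin ℓ))) : Set (Finset (Fin ℓ))).PairwiseDisjoint id := by
      intro a ha b hb hab
      simp only [coe_insert, Set.mem_insert_iff, mem_coe] at ha hb
      rcases ha with rfl | ha
      · rcases hb with rfl | hb
        · exact absurd rfl hab
        · exact (hrest_disj_U b hb).symm
      · rcases hb with rfl | hb
        · exact hrest_disj_U a ha
        · exact P'.disjoint ((mem_filter.mp ha).1) ((mem_filter.mp hb).1) hab
    refine ⟨δ, ⟨insert U rest, Finset.supIndep_iff_pairwiseDisjoint.mpr hpd, hcover, ?_⟩,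
      hfeas, ?_⟩
    · intro h
      rcases mem_insert.mp h with h | h
      · exact absurd (hTU hiT) (by rw [← h]; simp)
      · exact P'.bot_notMem (mem_filter.mp h).1
    · intro p hp
      rcases mem_insert.mp hp with rfl | hp
      · exact hUtight
      · exact hptight p (mem_filter.mp hp).1

theorem lp_value_eq_generic_intersection_dim (n k ℓ : ℕ)
    (hk : 1 ≤ k) (hkn : k ≤ n)
    (A : Fin ℓ → Finset (Fin n)) (hA : ∀ i, (A i).card ≤ k)
    (D : ℤ)
    (hD : IsGreatest
      {v : ℤ | ∃ P : Finpartition (Finset.univ : Finset (Fin ℓ)), v = partVal k A P} D) :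
    IsLeast
      {v : ℝ | ∃ δ : Fin ℓ → ℝ, (∀ i, 0 ≤ δ i) ∧
        (∀ I : Finset (Fin ℓ), I.Nonempty →
          ∑ i ∈ I, δ i ≤ (k : ℝ) - ((I.inf A).card : ℝ)) ∧
        v = (k : ℝ) - ∑ i, δ i} (D : ℝ) ∧
    ∃ δ : Fin ℓ → ℕ,
      (∀ I : Finset (Fin ℓ), I.Nonempty →
        (∑ i ∈ I, (δ i : ℤ)) ≤ (k : ℤ) - ((I.inf A).card : ℤ)) ∧
      (k : ℤ) - ∑ i, (δ i : ℤ) = D := by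
  obtain ⟨⟨P₀, hP₀⟩, hDub⟩ := hD
  obtain ⟨δ, P, hfeas, htight⟩ := exists_tight k A hA (Finset.univ : Finset (Fin ℓ))
  have hfeas' : ∀ I : Finset (Fin ℓ), I.Nonempty →
      ∑ i ∈ I, (δ i : ℤ) ≤ (k : ℤ) - ((I.inf A).card : ℤ) :=
    fun I hI => hfeas I hI (subset_univ I)
  -- the value of δ equals partVal of P
  have hsumP : ∑ i, (δ i : ℤ) = ∑ p ∈ P.parts, ((k : ℤ) - ((p.inf A).card : ℤ)) := by
    rw [← finpartition_sum_parts P (fun i => (δ i : ℤ))]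
    exact Finset.sum_congr rfl htight
  have hexpand : ∀ (P' : Finpartition (Finset.univ : Finset (Fin ℓ))),
      ∑ p ∈ P'.parts, ((k : ℤ) - ((p.inf A).card : ℤ))
        = (P'.parts.card : ℤ) * k - ∑ p ∈ P'.parts, ((p.inf A).card : ℤ) := by
    intro P'
    rw [Finset.sum_sub_distrib, Finset.sum_const, nsmul_eq_mul]
  have hval : (k : ℤ) - ∑ i, (δ i : ℤ) = partVal k A P := by
    rw [hsumP, hexpand, partVal]; ring
  -- δ's value is at most D (as partVal P ≤ D) and at least D (feasibility against P₀)
  have hle : (k : ℤ) - ∑ i, (δ i : ℤ) ≤ D := hval ▸ hDub ⟨P, rfl⟩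
  have hge : D ≤ (k : ℤ) - ∑ i, (δ i : ℤ) := by
    have hsum0 : ∑ i, (δ i : ℤ) = ∑ p ∈ P₀.parts, ∑ i ∈ p, (δ i : ℤ) :=
      (finpartition_sum_parts P₀ (fun i => (δ i : ℤ))).symm
    have hbound : ∑ p ∈ P₀.parts, ∑ i ∈ p, (δ i : ℤ)
        ≤ ∑ p ∈ P₀.parts, ((k : ℤ) - ((p.inf A).card : ℤ)) :=
      Finset.sum_le_sum (fun p hp => hfeas' p (P₀.nonempty_of_mem_parts hp))
    rw [hP₀, partVal]
    have := hexpand P₀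
    rw [hsum0]
    linarith
  have hDδ : (k : ℤ) - ∑ i, (δ i : ℤ) = D := le_antisymm hle hge
  constructor
  · constructor
    · -- D is attained by the real solution coming from δ
      refine ⟨fun i => (δ i : ℝ), fun i => by positivity, ?_, ?_⟩
      · intro I hI
        have := hfeas' I hI
        push_cast
        exact_mod_cast this
      · have : ((k : ℤ) - ∑ i, (δ i : ℤ) : ℤ) = D := hDδ
        push_cast
        exact_mod_cast congrArg (fun z : ℤ => (z : ℝ)) hDδ.symm
    · -- D lower bounds all feasible values
      rintro v ⟨ε, hε0, hcon, rfl⟩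
      have hsum0 : ∑ i, ε i = ∑ p ∈ P₀.parts, ∑ i ∈ p, ε i :=
        (finpartition_sum_parts P₀ ε).symm
      have hbound : ∑ p ∈ P₀.parts, ∑ i ∈ p, ε i
          ≤ ∑ p ∈ P₀.parts, ((k : ℝ) - ((p.inf A).card : ℝ)) :=
        Finset.sum_le_sum (fun p hp => hcon p (P₀.nonempty_of_mem_parts hp))
      have hexpandR : ∑ p ∈ P₀.parts, ((k : ℝ) - ((p.inf A).card : ℝ))
          = (P₀.parts.card : ℝ) * k - ∑ p ∈ P₀.parts, ((p.inf A).card : ℝ) := by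
        rw [Finset.sum_sub_distrib, Finset.sum_const, nsmul_eq_mul]
      have hDr : (D : ℝ) = (∑ p ∈ P₀.parts, ((p.inf A).card : ℝ))
          - ((P₀.parts.card : ℝ) - 1) * k := by
        rw [hP₀, partVal]
        push_cast
        ring
      rw [hDr, hsum0]
      linarith
  · exact ⟨δ, hfeas', hDδ⟩
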